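/- Let P be a projective abelian group (i.e., a free abelian group) and let M be a torsion quasi-projective abelian group. Then the abelian group P ⊕ M is dual automorphism-invariant as a ℤ-module. -/

import Mathlib

open LinearMap Submodule

/-- A submodule N of M is small (superfluous) in M:
N + K = M implies K = M for every submodule K. -/
def IsSmall {R : Type*} [Ring R] {M : Type*} [AddCommGroup M] [Module R M]
    (N : Submodule R M) : Prop :=
  ∀ K : Submodule R M, N ⊔ K = ⊤ → K = ⊤

/-- M is a dual automorphism-invariant R-module: for any two small submodules
K₁, K₂ of M, every surjective homomorphism η : M/K₁ → M/K₂ whose kernel is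
small in M/K₁ lifts to an endomorphism φ of M (i.e. π₂ ∘ φ = η ∘ π₁). -/
def IsDualAutoInv (R M : Type*) [Ring R] [AddCommGroup M] [Module R M] : Prop :=
  ∀ (K₁ K₂ : Submodule R M), IsSmall K₁ → IsSmall K₂ →
    ∀ η : (M ⧸ K₁) →ₗ[R] (M ⧸ K₂), Function.Surjective η →
      IsSmall (LinearMap.ker η) →
      ∃ φ : M →ₗ[R] M, K₂.mkQ ∘ₗ φ = η ∘ₗ K₁.mkQ

/-- M is quasi-projective: every homomorphism M → M/N lifts to an endomorphism of M. -/
def IsQuasiProjective (R M : Type*) [Ring R] [AddCommGroup M] [Module R M] : Prop :=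
  ∀ (N : Submodule R M) (φ : M →ₗ[R] M ⧸ N), ∃ ψ : M →ₗ[R] M, N.mkQ ∘ₗ ψ = φ

lemma isSmall_map_of_surjective {A B : Type*} [AddCommGroup A] [AddCommGroup B] (f : A →ₗ[ℤ] B) (hf : Function.Surjective f)
    {N : Submodule ℤ A} (h : IsSmall N) : IsSmall (N.map f) := by
  intro K hK
  have h1 : N ⊔ K.comap f = ⊤ := by
    rw [eq_top_iff]
    rintro a -
    have ha : f a ∈ N.map f ⊔ K := hK ▸ Submodule.mem_top
    obtain ⟨y, hy, k, hk, hyk⟩ := Submodule.mem_sup.mp ha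
    obtain ⟨n, hn, rfl⟩ := hy
    refine Submodule.mem_sup.mpr ⟨n, hn, a - n, ?_, by abel⟩
    simp only [Submodule.mem_comap, map_sub]
    have : f a - f n = k := by linear_combination (norm := module) -hyk
    rw [this]; exact hk
  have h2 := h _ h1
  rw [eq_top_iff]
  rintro b -
  obtain ⟨a, rfl⟩ := hf b
  have : a ∈ K.comap f := h2 ▸ Submodule.mem_top
  exact this

lemma isSmall_free_eq_bot {P : Type*} [AddCommGroup P] [Module.Free ℤ P]
    {N : Submodule ℤ P} (h : IsSmall N) : N = ⊥ := by
  by_contra hne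
  obtain ⟨x, hxN, hx0⟩ : ∃ x ∈ N, x ≠ 0 := by
    by_contra hall
    push_neg at hall
    exact hne ((Submodule.eq_bot_iff N).mpr hall)
  let b := Module.Free.chooseBasis ℤ P
  obtain ⟨i, hi⟩ : ∃ i, b.repr x i ≠ 0 := by
    by_contra hall
    push_neg at hall
    apply hx0
    have : b.repr x = 0 := Finsupp.ext hall
    simpa using congrArg b.repr.symm this
  set a : ℤ := b.repr x i with ha
  obtain ⟨p, hple, hp⟩ := Nat.exists_infinite_primes (a.natAbs + 1)
  have hpa : ¬ ((p : ℤ) ∣ a) := by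
    intro hdvd
    have : (p : ℤ).natAbs ∣ a.natAbs := Int.natAbs_dvd_natAbs.mpr hdvd
    simp only [Int.natAbs_natCast] at this
    have := Nat.le_of_dvd (by omega) this
    omega
  have hcop : IsCoprime a (p : ℤ) := by
    rw [Int.isCoprime_iff_gcd_eq_one]
    have : Nat.Coprime p a.natAbs := (Nat.Prime.coprime_iff_not_dvd hp).mpr (by
      intro hdvd
      exact hpa (Int.natAbs_dvd_natAbs.mp (by simpa using hdvd)))
    unfold Int.gcd
    simpa [Nat.coprime_comm] using this.symm
  obtain ⟨u, v, huv⟩ := hcop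
  set K : Submodule ℤ P := Submodule.comap (b.coord i) (Submodule.span ℤ {(p : ℤ)}) with hKdef
  have hmemK : ∀ z : P, z ∈ K ↔ (p : ℤ) ∣ b.repr z i := by
    intro z
    simp [hKdef, Submodule.mem_comap, Module.Basis.coord_apply, Ideal.mem_span_singleton]
  have hsup : N ⊔ K = ⊤ := by
    rw [eq_top_iff]
    rintro z -
    refine Submodule.mem_sup.mpr ⟨(b.repr z i * u) • x, Submodule.smul_mem _ _ hxN,
      z - (b.repr z i * u) • x, ?_, by abel⟩
    rw [hmemK]
    have : b.repr (z - (b.repr z i * u) • x) i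
        = b.repr z i - (b.repr z i * u) * a := by
      simp [map_sub, map_smul, ha, mul_comm]
    rw [this]
    refine ⟨b.repr z i * v, ?_⟩
    have : b.repr z i * (u * a + v * (p:ℤ)) = b.repr z i * 1 := by rw [huv]
    nlinarith [this]
  have hKtop := h K hsup
  have : b i ∈ K := hKtop ▸ Submodule.mem_top
  rw [hmemK] at this
  rw [Module.Basis.repr_self, Finsupp.single_eq_same] at this
  have h1 := Int.le_of_dvd one_pos this
  have h2 := hp.two_le
  omega

theorem free_torsionQuasiProjective_prod_dualAutoInv
    (P M : Type*) [AddCommGroup P] [AddCommGroup M]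
    [Module.Free ℤ P] (htor : AddMonoid.IsTorsion M)
    (hM : IsQuasiProjective ℤ M) :
    IsDualAutoInv ℤ (P × M) := by
  intro K₁ K₂ hK₁ hK₂ η hsurj hker
  -- small submodules have zero first component
  have hfst : ∀ (K : Submodule ℤ (P × M)), IsSmall K → ∀ z ∈ K, z.1 = 0 := by
    intro K hK z hz
    have hsm : IsSmall (K.map (LinearMap.fst ℤ P M)) :=
      isSmall_map_of_surjective _ (fun p => ⟨(p, 0), rfl⟩) hK
    have hb := isSmall_free_eq_bot hsm
    have : z.1 ∈ K.map (LinearMap.fst ℤ P M) := ⟨z, hz, rfl⟩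
    rw [hb] at this
    simpa using this
  -- second components of the small submodules
  set K₂' : Submodule ℤ M := K₂.map (LinearMap.snd ℤ P M) with hK₂'
  have hinr : K₂' ≤ Submodule.comap (LinearMap.inr ℤ P M) K₂ := by
    rintro m ⟨z, hz, rfl⟩
    have h1 : z.1 = 0 := hfst K₂ hK₂ z hz
    have : (LinearMap.inr ℤ P M) z.2 = z := by
      ext
      · simp [h1]
      · simp
    simpa [Submodule.mem_comap, this] using hz
  have hsnd : K₂ ≤ Submodule.comap (LinearMap.snd ℤ P M) K₂' := by
    intro z hz
    exact ⟨z, hz, rfl⟩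
  set j : (M ⧸ K₂') →ₗ[ℤ] ((P × M) ⧸ K₂) := K₂'.mapQ K₂ (LinearMap.inr ℤ P M) hinr with hj
  set q : ((P × M) ⧸ K₂) →ₗ[ℤ] (M ⧸ K₂') := K₂.mapQ K₂' (LinearMap.snd ℤ P M) hsnd with hq
  have hker2 : K₂ ≤ LinearMap.ker (LinearMap.fst ℤ P M) := by
    intro z hz; exact hfst K₂ hK₂ z hz
  set fbar : ((P × M) ⧸ K₂) →ₗ[ℤ] P := K₂.liftQ (LinearMap.fst ℤ P M) hker2 with hfbar
  set β : M →ₗ[ℤ] ((P × M) ⧸ K₂) := η ∘ₗ K₁.mkQ ∘ₗ LinearMap.inr ℤ P M with hβ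
  -- first component of β is 0 by torsion
  have hfb : ∀ m : M, fbar (β m) = 0 := by
    intro m
    obtain ⟨n, hn, hnm⟩ := isOfFinAddOrder_iff_nsmul_eq_zero.mp (htor m)
    have h1 : n • (fbar (β m)) = 0 := by
      rw [← map_nsmul, ← map_nsmul, hnm, map_zero, map_zero]
    have h2 : (n : ℤ) • (fbar (β m)) = 0 := by
      rw [Nat.cast_smul_eq_nsmul]; exact h1
    rcases smul_eq_zero.mp h2 with h | h
    · exfalso; exact_mod_cast (by omega : (n : ℤ) ≠ 0) h
    · exact h
  -- β factors through M ⧸ K₂'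
  have hjq : ∀ m : M, j (q (β m)) = β m := by
    intro m
    obtain ⟨z, hz⟩ := K₂.mkQ_surjective (β m)
    have hz1 : z.1 = 0 := by
      have := hfb m
      rw [← hz] at this
      simpa [hfbar, Submodule.liftQ_apply] using this
    rw [← hz, hq, hj, Submodule.mkQ_apply, Submodule.mapQ_apply, Submodule.mapQ_apply]
    congr 1
    ext
    · simp [hz1]
    · simp
  -- lift the M-component by quasi-projectivity
  obtain ⟨ψ, hψ⟩ := hM K₂' (q ∘ₗ β)
  -- lift the P-component by projectivity
  obtain ⟨g, hg⟩ := Module.projective_lifting_property K₂.mkQ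
    (η ∘ₗ K₁.mkQ ∘ₗ LinearMap.inl ℤ P M) K₂.mkQ_surjective
  refine ⟨g.coprod ((LinearMap.inr ℤ P M) ∘ₗ ψ), ?_⟩
  ext z
  · -- on P
    have := congrFun (congrArg (fun f => f.toFun) hg) z
    simpa [show ((0 : P), (0 : M)) = (0 : P × M) from rfl] using this
  · -- on M
    have h1 : K₂.mkQ ((LinearMap.inr ℤ P M) (ψ z)) = j (K₂'.mkQ (ψ z)) := by
      rw [hj, Submodule.mkQ_apply, Submodule.mkQ_apply, Submodule.mapQ_apply]
    have h2 : K₂'.mkQ (ψ z) = q (β z) := by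
      have := congrFun (congrArg (fun f => f.toFun) hψ) z
      simpa using this
    simp only [LinearMap.comp_apply, LinearMap.coprod_apply, LinearMap.inr_apply,
      LinearMap.inl_apply]
    rw [show ((0 : P), z) = (LinearMap.inr ℤ P M) z from rfl]
    calc K₂.mkQ (g 0 + (LinearMap.inr ℤ P M) (ψ z))
        = K₂.mkQ ((LinearMap.inr ℤ P M) (ψ z)) := by rw [map_add, map_zero, map_zero, zero_add]
      _ = j (q (β z)) := by rw [h1, h2]
      _ = β z := hjq z
      _ = η (K₁.mkQ ((LinearMap.inr ℤ P M) z)) := rfl
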